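/- Every n-ary homomorphism ψ from (G,f) = der_{θ,b}(G,·) to an n-ary group (H,h) = der_{η,c}(H,*) with (H,*) abelian has the form ψ(x) = φ(x)*a, where φ : (G,·) → (H,*) is a group homomorphism satisfying φ∘θ = η∘φ, and a ∈ H satisfies h(a,...,a) = a*φ(b). -/

import Mathlib

/-- The `(θ,b)`-derived `n`-ary operation on a group `G`. -/
def derOp {G : Type*} [Group G] (n : ℕ) (θ : MulAut G) (b : G) (x : Fin n → G) : G :=
  (List.ofFn fun i : Fin n => (θ ^ (i : ℕ)) (x i)).prod * b

lemma derOp_cons {G : Type*} [Group G] (m : ℕ) (θ : MulAut G) (b : G) (x : Fin (m + 2) → G) :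
    derOp (m + 2) θ b x =
      x 0 * (θ (x 1) *
        ((List.ofFn fun i : Fin m => (θ ^ ((i : ℕ) + 2)) (x i.succ.succ)).prod * b)) := by
  simp [derOp, List.ofFn_succ, Fin.succ_zero_eq_one, mul_assoc]

theorem hom_to_abelian_derived_structure {G H : Type*} [Group G] [CommGroup H]
    (n : ℕ) (hn : 2 ≤ n)
    (θ : MulAut G) (b : G) (hb : θ b = b)
    (hconj : ∀ x : G, (θ ^ (n - 1)) x = b * x * b⁻¹)
    (η : MulAut H) (c : H) (hc : η c = c) (hη : η ^ (n - 1) = 1)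
    (ψ : G → H)
    (hψ : ∀ x : Fin n → G,
      ψ (derOp n θ b x) = derOp n η c (fun i => ψ (x i))) :
    ∃ (φ : G →* H) (a : H),
      (∀ g : G, ψ g = φ g * a) ∧
      (∀ x : G, φ (θ x) = η (φ x)) ∧
      derOp n η c (fun _ : Fin n => a) = a * φ b := by
  obtain ⟨m, rfl⟩ : ∃ m, n = m + 2 := ⟨n - 2, by omega⟩
  set a : H := ψ 1 with ha
  set R : H := (List.ofFn fun i : Fin m => (η ^ ((i : ℕ) + 2)) a).prod * c with hR
  have E : ∀ g h : G, ψ (g * (θ h * b)) = ψ g * (η (ψ h) * R) := by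
    intro g h
    have key := hψ (fun i : Fin (m + 2) =>
      if (i : ℕ) = 0 then g else if (i : ℕ) = 1 then h else 1)
    rw [derOp_cons, derOp_cons] at key
    simpa using key
  have Egb : ∀ g : G, ψ (g * b) = ψ g * (η a * R) := by
    intro g
    have := E g 1
    simpa using this
  have mul_rule : ∀ p q : G, ψ (p * q) = ψ p * ψ q * a⁻¹ := by
    intro p q
    have hq : θ (θ.symm (q * b⁻¹)) * b = q := by simp
    have h1 := E p (θ.symm (q * b⁻¹))
    have h2 := E 1 (θ.symm (q * b⁻¹))
    rw [hq] at h1 h2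
    rw [one_mul] at h2
    rw [h1, h2, ← ha]
    simp [mul_assoc, mul_comm, mul_left_comm]
  have hφmul : ∀ p q : G, ψ (p * q) * a⁻¹ = (ψ p * a⁻¹) * (ψ q * a⁻¹) := by
    intro p q
    rw [mul_rule]
    simp [mul_assoc, mul_comm, mul_left_comm]
  refine ⟨⟨⟨fun g => ψ g * a⁻¹, by show ψ 1 * a⁻¹ = 1; rw [← ha]; simp⟩, hφmul⟩, a, ?_, ?_, ?_⟩
  · intro g; simp
  · intro x
    have h1 : ψ (θ x * b) = a * (η (ψ x) * R) := by
      have := E 1 x; simpa using this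
    have h3 : ψ (θ x) * (η a * R) = a * (η (ψ x) * R) := by rw [← Egb (θ x), h1]
    have h3' : ψ (θ x) * η a * R = a * η (ψ x) * R := by
      rw [mul_assoc, mul_assoc]; exact h3
    have h4 : ψ (θ x) * η a = a * η (ψ x) := mul_right_cancel h3'
    have h5 : ψ (θ x) = a * η (ψ x) * (η a)⁻¹ := by
      rw [← h4]; simp [mul_assoc]
    simp only [MonoidHom.coe_mk, OneHom.coe_mk, map_mul, map_inv]
    rw [h5]
    simp [mul_assoc, mul_comm, mul_left_comm]
  · have hones := hψ (fun _ : Fin (m + 2) => 1)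
    have hG : derOp (m + 2) θ b (fun _ : Fin (m + 2) => (1 : G)) = b := by
      rw [derOp_cons]; simp
    rw [hG] at hones
    have h6 : derOp (m + 2) η c (fun _ : Fin (m + 2) => a) = ψ b := hones.symm
    simp only [MonoidHom.coe_mk, OneHom.coe_mk]
    rw [h6]
    simp [mul_assoc, mul_comm, mul_left_comm]
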